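/- Let N ≥ 2 and let A be the matrix with entries A_{B,X} = (-1)^{|B ∩ X|}, where B ranges over nonempty subsets of {2,...,N} and X over even-cardinality subsets of [N] with |X| ≥ 2. Then for any two distinct columns X ≠ Y, the Hamming distance between the columns A_{·,X} and A_{·,Y} (the number of row indices B where they differ) equals 2^{N-2}. -/
import Mathlib

open Finset

private def tog {α : Type*} [DecidableEq α] (a : α) (B : Finset α) : Finset α :=
  if a ∈ B then B.erase a else insert a B

private lemma tog_mem {α : Type*} [DecidableEq α] {a : α} {u B : Finset α}
    (hau : a ∈ u) (hB : B ⊆ u) : tog a B ⊆ u := by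
  unfold tog
  split
  · exact (Finset.erase_subset a B).trans hB
  · exact Finset.insert_subset hau hB

private lemma tog_invol {α : Type*} [DecidableEq α] (a : α) (B : Finset α) :
    tog a (tog a B) = B := by
  unfold tog
  by_cases h : a ∈ B
  · rw [if_pos h, if_neg (Finset.notMem_erase a B), Finset.insert_erase h]
  · rw [if_neg h, if_pos (Finset.mem_insert_self a B), Finset.erase_insert h]

private lemma tog_parity {α : Type*} [DecidableEq α] {a : α} {s : Finset α} (has : a ∈ s)
    (B : Finset α) : Odd ((tog a B ∩ s).card) ↔ ¬ Odd ((B ∩ s).card) := by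
  unfold tog
  by_cases h : a ∈ B
  · have hmem : a ∈ B ∩ s := Finset.mem_inter.mpr ⟨h, has⟩
    have : (B.erase a ∩ s) = (B ∩ s).erase a := by
      ext x; simp only [Finset.mem_erase, Finset.mem_inter]; tauto
    rw [if_pos h, this, Finset.card_erase_of_mem hmem]
    have hc : 1 ≤ (B ∩ s).card := Finset.card_pos.mpr ⟨a, hmem⟩
    simp only [Nat.odd_iff]
    omega
  · have hmem : a ∉ B ∩ s := fun hx => h (Finset.mem_inter.mp hx).1
    have : (insert a B ∩ s) = insert a (B ∩ s) := by
      ext x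
      by_cases hx : x = a
      · subst hx; simp [has]
      · simp [hx, Finset.mem_inter]
    rw [if_neg h, this, Finset.card_insert_of_notMem hmem]
    simp only [Nat.odd_iff]
    omega

private lemma card_sd {α : Type*} [DecidableEq α] (s t : Finset α) :
    (symmDiff s t).card + 2 * (s ∩ t).card = s.card + t.card := by
  rw [symmDiff_eq_sup_sdiff_inf]
  simp only [Finset.sup_eq_union, Finset.inf_eq_inter]
  have hsub : s ∩ t ⊆ s ∪ t := Finset.inter_subset_union
  rw [Finset.card_sdiff_of_subset hsub]
  have h1 := Finset.card_inter_add_card_union s t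
  have h2 : (s ∩ t).card ≤ (s ∪ t).card := Finset.card_le_card hsub
  omega

private lemma count_odd {α : Type*} [DecidableEq α] (u s : Finset α) (hs : s ⊆ u)
    (hne : s.Nonempty) :
    (u.powerset.filter (fun B => Odd (B ∩ s).card)).card = 2 ^ (u.card - 1) := by
  obtain ⟨a, has⟩ := hne
  have hau : a ∈ u := hs has
  have key : (u.powerset.filter (fun B => Odd (B ∩ s).card)).card
      = (u.powerset.filter (fun B => ¬ Odd (B ∩ s).card)).card := by
    apply Finset.card_bij' (fun B _ => tog a B) (fun B _ => tog a B)
    · intro B hB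
      simp only [Finset.mem_filter, Finset.mem_powerset] at hB ⊢
      exact ⟨tog_mem hau hB.1, by rw [tog_parity has]; exact not_not.mpr hB.2⟩
    · intro B hB
      simp only [Finset.mem_filter, Finset.mem_powerset] at hB ⊢
      refine ⟨tog_mem hau hB.1, ?_⟩
      rw [tog_parity has]; exact hB.2
    · intro B _; exact tog_invol a B
    · intro B _; exact tog_invol a B
  have hsum := Finset.card_filter_add_card_filter_not
    (s := u.powerset) (p := fun B => Odd (B ∩ s).card)
  rw [Finset.card_powerset] at hsum
  have hu : 1 ≤ u.card := Finset.card_pos.mpr ⟨a, hau⟩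
  have h2 : 2 ^ u.card = 2 * 2 ^ (u.card - 1) := by
    rw [← pow_succ']
    congr 1
    omega
  omega

theorem hamming_distance_columns (N : ℕ) (hN : 2 ≤ N) (X Y : Finset (Fin N))
    (hX : Even X.card) (hX2 : 2 ≤ X.card)
    (hY : Even Y.card) (hY2 : 2 ≤ Y.card) (hne : X ≠ Y) :
    ((Finset.univ.erase (⟨0, by omega⟩ : Fin N)).powerset.filter
        (fun B => B.Nonempty ∧
          (-1 : ℤ) ^ (B ∩ X).card ≠ (-1 : ℤ) ^ (B ∩ Y).card)).card = 2 ^ (N - 2) := by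
  set x0 : Fin N := ⟨0, by omega⟩
  set u : Finset (Fin N) := Finset.univ.erase x0 with hu
  set S : Finset (Fin N) := symmDiff X Y with hS
  have hScard : (S.card) + 2 * (X ∩ Y).card = X.card + Y.card := card_sd X Y
  have hSeven : Even S.card := by
    obtain ⟨p, hp⟩ := hX; obtain ⟨q, hq⟩ := hY
    refine ⟨(S.card)/2, ?_⟩
    omega
  have hSne : S.Nonempty := by
    rw [Finset.nonempty_iff_ne_empty]
    intro h
    exact hne (Finset.symmDiff_eq_empty.mp (hS ▸ h))
  have hS2 : 2 ≤ S.card := by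
    rcases hSeven with ⟨k, hk⟩
    have := Finset.card_pos.mpr hSne
    omega
  -- s := S ∩ u is nonempty and ⊆ u
  have hsu : S ∩ u ⊆ u := Finset.inter_subset_right
  have hsne : (S ∩ u).Nonempty := by
    have : (S.erase x0).Nonempty := by
      rw [← Finset.card_pos, Finset.card_erase_eq_ite]
      split <;> omega
    obtain ⟨b, hb⟩ := this
    rw [Finset.mem_erase] at hb
    exact ⟨b, Finset.mem_inter.mpr ⟨hb.2, Finset.mem_erase.mpr ⟨hb.1, Finset.mem_univ b⟩⟩⟩
  have hfilter : (u.powerset.filter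
        (fun B => B.Nonempty ∧
          (-1 : ℤ) ^ (B ∩ X).card ≠ (-1 : ℤ) ^ (B ∩ Y).card))
      = u.powerset.filter (fun B => Odd (B ∩ (S ∩ u)).card) := by
    apply Finset.filter_congr
    intro B hB
    rw [Finset.mem_powerset] at hB
    have hBS : B ∩ (S ∩ u) = B ∩ S := by
      ext x
      simp only [Finset.mem_inter]
      exact ⟨fun h => ⟨h.1, h.2.1⟩, fun h => ⟨h.1, h.2, hB h.1⟩⟩
    have hcard : (B ∩ S).card + 2 * ((B ∩ X) ∩ (B ∩ Y)).card
        = (B ∩ X).card + (B ∩ Y).card := by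
      have hd : B ∩ S = symmDiff (B ∩ X) (B ∩ Y) := by
        rw [hS]
        exact inf_symmDiff_distrib_left B X Y
      rw [hd]
      exact card_sd (B ∩ X) (B ∩ Y)
    rw [hBS]
    constructor
    · rintro ⟨-, hneq⟩
      rcases Nat.even_or_odd (B ∩ X).card with hx | hx <;>
        rcases Nat.even_or_odd (B ∩ Y).card with hy | hy
      · simp [hx.neg_one_pow, hy.neg_one_pow] at hneq
      · rw [Nat.odd_iff]
        rw [Nat.even_iff] at hx; rw [Nat.odd_iff] at hy
        omega
      · rw [Nat.odd_iff]
        rw [Nat.odd_iff] at hx; rw [Nat.even_iff] at hy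
        omega
      · simp [hx.neg_one_pow, hy.neg_one_pow] at hneq
    · intro hodd
      have hBne : B.Nonempty := by
        have : (B ∩ S).Nonempty := Finset.card_pos.mp hodd.pos
        obtain ⟨b, hb⟩ := this
        exact ⟨b, (Finset.mem_inter.mp hb).1⟩
      refine ⟨hBne, ?_⟩
      rw [Nat.odd_iff] at hodd
      rcases Nat.even_or_odd (B ∩ X).card with hx | hx <;>
        rcases Nat.even_or_odd (B ∩ Y).card with hy | hy
      · rw [Nat.even_iff] at hx hy; omega
      · rw [hx.neg_one_pow, hy.neg_one_pow]; decide
      · rw [hx.neg_one_pow, hy.neg_one_pow]; decide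
      · rw [Nat.odd_iff] at hx hy; omega
  rw [hfilter, count_odd u (S ∩ u) hsu hsne]
  have hucard : u.card = N - 1 := by
    rw [hu, Finset.card_erase_of_mem (Finset.mem_univ x0), Finset.card_univ, Fintype.card_fin]
  rw [hucard]
  have h12 : N - 1 - 1 = N - 2 := by omega
  rw [h12]
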